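/- Let E_n be the set of words w of length n over alphabet A such that some factor of length ⌈3·log_{1/β} n⌉ appears twice at non-overlapping positions in some cyclic rotation of w, where β = max(p_1, 1−p_1). Then under the product measure P_n with letter distribution p (0 < p_1 < 1), P_n(E_n) = O(n² · β^{3 log_{1/β} n}) = O(1/n). -/

import Mathlib

set_option maxHeartbeats 1000000

open scoped ENNReal

private lemma tsum_pi_fin (q : ℕ → ℝ≥0∞) (hq : ∑' x, q x = 1) :
    ∀ m : ℕ, (∑' g : Fin m → ℕ, ∏ i, q (g i)) = 1 := by
  intro m
  induction m with
  | zero =>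
      rw [tsum_eq_single (fun _ => 0) (fun b hb => absurd (Subsingleton.elim b _) hb)]
      simp
  | succ m ih =>
      rw [← (Fin.consEquiv (fun _ : Fin (m + 1) => ℕ)).tsum_eq]
      have hterm : ∀ x : ℕ × (Fin m → ℕ),
          (∏ i, q (Fin.consEquiv (fun _ : Fin (m + 1) => ℕ) x i)) =
            q x.1 * ∏ i, q (x.2 i) := by
        intro x
        rw [Fin.prod_univ_succ]
        simp [Fin.consEquiv]
      calc (∑' x : ℕ × (Fin m → ℕ), ∏ i, q (Fin.consEquiv (fun _ : Fin (m + 1) => ℕ) x i))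
          = ∑' (a : ℕ) (g : Fin m → ℕ), q a * ∏ i, q (g i) := by
            rw [ENNReal.tsum_prod']
            exact tsum_congr fun a => tsum_congr fun g => hterm (a, g)
        _ = 1 := by
            simp only [ENNReal.tsum_mul_left, ih, mul_one, hq]

private lemma tsum_pi_one (q : ℕ → ℝ≥0∞) (hq : ∑' x, q x = 1) (σ : Type) [Fintype σ] :
    (∑' g : σ → ℕ, ∏ i, q (g i)) = 1 := by
  have e : σ ≃ Fin (Fintype.card σ) := Fintype.equivFin σ
  rw [← (Equiv.arrowCongr e.symm (Equiv.refl ℕ)).tsum_eq]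
  have hterm : ∀ g : Fin (Fintype.card σ) → ℕ,
      (∏ i, q (Equiv.arrowCongr e.symm (Equiv.refl ℕ) g i)) = ∏ j, q (g j) := by
    intro g
    exact (Fintype.prod_equiv e.symm (fun j => q (g j))
      (fun i => q (Equiv.arrowCongr e.symm (Equiv.refl ℕ) g i))
      (fun j => by simp)).symm
  rw [tsum_congr hterm, tsum_pi_fin q hq]

private lemma event_bound (q : ℕ → ℝ≥0∞) (hq : ∑' x, q x = 1) (B : ℝ≥0∞)
    (hB : ∀ c, q c ≤ B) {n L : ℕ} (x y : Fin L → Fin n)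
    (hx : Function.Injective x) (hxy : ∀ t t', x t ≠ y t') :
    (∑' w : {w : Fin n → ℕ // ∀ t, w (x t) = w (y t)}, ∏ i, q (w.1 i)) ≤ B ^ L := by
  classical
  set S : Finset (Fin n) := Finset.image x Finset.univ with hS
  have hyS : ∀ t, y t ∈ Sᶜ := by
    intro t
    simp only [S, Finset.mem_compl, Finset.mem_image, Finset.mem_univ, true_and]
    rintro ⟨t', h⟩
    exact hxy t' t h
  have hterm : ∀ w : {w : Fin n → ℕ // ∀ t, w (x t) = w (y t)},
      (∏ i, q (w.1 i)) ≤ B ^ L * ∏ i ∈ Sᶜ, q (w.1 i) := by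
    intro w
    rw [← Finset.prod_mul_prod_compl S (fun i => q (w.1 i))]
    gcongr
    calc (∏ i ∈ S, q (w.1 i)) = ∏ t : Fin L, q (w.1 (x t)) := by
          rw [hS, Finset.prod_image (fun a _ b _ h => hx h)]
      _ ≤ ∏ _t : Fin L, B := Finset.prod_le_prod' fun t _ => hB _
      _ = B ^ L := by simp
  refine le_trans (ENNReal.tsum_le_tsum hterm) ?_
  rw [ENNReal.tsum_mul_left]
  have key : (∑' w : {w : Fin n → ℕ // ∀ t, w (x t) = w (y t)}, ∏ i ∈ Sᶜ, q (w.1 i)) ≤ 1 := by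
    set F : {w : Fin n → ℕ // ∀ t, w (x t) = w (y t)} → ({i : Fin n // i ∈ Sᶜ} → ℕ) :=
      fun w i => w.1 i.1 with hF
    have hFinj : Function.Injective F := by
      intro w w' h
      apply Subtype.ext
      funext i
      by_cases hi : i ∈ Sᶜ
      · exact congrFun h ⟨i, hi⟩
      · have hiS : i ∈ S := by simpa using hi
        obtain ⟨t, -, rfl⟩ := Finset.mem_image.1 hiS
        calc w.1 (x t) = w.1 (y t) := w.2 t
          _ = w'.1 (y t) := congrFun h ⟨y t, hyS t⟩
          _ = w'.1 (x t) := (w'.2 t).symm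
    have heq : ∀ w : {w : Fin n → ℕ // ∀ t, w (x t) = w (y t)},
        (∏ i ∈ Sᶜ, q (w.1 i)) = ∏ i : {i : Fin n // i ∈ Sᶜ}, q (F w i) := by
      intro w
      exact (Finset.prod_coe_sort Sᶜ (fun i => q (w.1 i))).symm
    rw [tsum_congr heq]
    calc (∑' w : {w : Fin n → ℕ // ∀ t, w (x t) = w (y t)},
            ∏ i : {i : Fin n // i ∈ Sᶜ}, q (F w i))
        ≤ ∑' g : {i : Fin n // i ∈ Sᶜ} → ℕ, ∏ i, q (g i) :=
          ENNReal.tsum_comp_le_tsum_of_injective hFinj _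
      _ = 1 := tsum_pi_one q hq _
  calc B ^ L * (∑' w : {w : Fin n → ℕ // ∀ t, w (x t) = w (y t)}, ∏ i ∈ Sᶜ, q (w.1 i))
      ≤ B ^ L * 1 := by gcongr
    _ = B ^ L := mul_one _


private lemma real_of_ennreal_bound {α : Type*} (f : α → ℝ) (h0 : ∀ a, 0 ≤ f a) (r : ℝ)
    (hr : 0 ≤ r) (h : (∑' a, ENNReal.ofReal (f a)) ≤ ENNReal.ofReal r) : ∑' a, f a ≤ r := by
  by_cases hs : Summable f
  · rw [← ENNReal.ofReal_le_ofReal_iff hr, ENNReal.ofReal_tsum_of_nonneg h0 hs]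
    exact h
  · rw [tsum_eq_zero_of_not_summable hs]
    exact hr

/-- let `β = max(p₁, 1−p₁)` and let `E_n` be the set of words `w`
of length `n` such that some cyclic rotation of `w` contains two disjoint
occurrences of the same factor of length `⌈3 log_{1/β} n⌉`. Then
`P_n(E_n) = O(1/n)`. -/
theorem repeated_factor_probability (p : ℕ → ℝ) (hnn : ∀ i, 0 ≤ p i)
    (hsum : Summable p) (htot : ∑' i, p i = 1)
    (hp0 : 0 < p 0) (hp1 : p 0 < 1) :
    ∃ C : ℝ, ∀ n : ℕ, ∀ hn : 2 ≤ n,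
      (∑' w : {w : Fin n → ℕ //
          ∃ r s₁ s₂ : ℕ,
            s₁ + ⌈3 * Real.logb (1 / max (p 0) (1 - p 0)) n⌉₊ ≤ s₂ ∧
            s₂ + ⌈3 * Real.logb (1 / max (p 0) (1 - p 0)) n⌉₊ ≤ n ∧
            ∀ t : ℕ, ∀ ht : t < ⌈3 * Real.logb (1 / max (p 0) (1 - p 0)) n⌉₊,
              w ⟨(s₁ + t + r) % n, Nat.mod_lt _ (by omega)⟩ =
                w ⟨(s₂ + t + r) % n, Nat.mod_lt _ (by omega)⟩},
        ∏ i, p (w.1 i)) ≤ C / n := by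
  classical
  refine ⟨1, fun n hn => ?_⟩
  have hn0 : 0 < n := by omega
  set β : ℝ := max (p 0) (1 - p 0) with hβ
  set L : ℕ := ⌈3 * Real.logb (1 / β) n⌉₊ with hLdef
  have hβ0 : 0 < β := lt_of_lt_of_le hp0 (le_max_left _ _)
  have hβ1 : β < 1 := max_lt hp1 (by linarith)
  have hnR : (0:ℝ) < n := by exact_mod_cast hn0
  have hq1 : (∑' x, ENNReal.ofReal (p x)) = 1 := by
    rw [← ENNReal.ofReal_tsum_of_nonneg hnn hsum, htot, ENNReal.ofReal_one]
  have hqB : ∀ c, ENNReal.ofReal (p c) ≤ ENNReal.ofReal β := by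
    intro c
    apply ENNReal.ofReal_le_ofReal
    rcases eq_or_ne c 0 with rfl | hc
    · exact le_max_left _ _
    · refine le_trans ?_ (le_max_right _ _)
      have h := Summable.sum_le_tsum ({0, c} : Finset ℕ) (fun i _ => hnn i) hsum
      rw [Finset.sum_pair (Ne.symm hc), htot] at h
      linarith
  -- reduce to an ENNReal statement
  refine real_of_ennreal_bound _ (fun w => Finset.prod_nonneg fun i _ => hnn _) _
    (by positivity) ?_
  rw [tsum_congr (fun w => ENNReal.ofReal_prod_of_nonneg (fun i _ => hnn _))]
  -- the covering family of events
  set G : Fin n × Fin n → Set (Fin n → ℕ) := fun ab =>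
    {w | L ≤ n ∧
      (∀ t t' : ℕ, t < L → t' < L → ((ab.1 : ℕ) + t) % n ≠ ((ab.2 : ℕ) + t') % n) ∧
      ∀ t : ℕ, t < L → w ⟨((ab.1 : ℕ) + t) % n, Nat.mod_lt _ hn0⟩ =
        w ⟨((ab.2 : ℕ) + t) % n, Nat.mod_lt _ hn0⟩} with hG
  have hsub : {w : Fin n → ℕ |
      ∃ r s₁ s₂ : ℕ, s₁ + L ≤ s₂ ∧ s₂ + L ≤ n ∧
        ∀ t : ℕ, ∀ ht : t < L,
          w ⟨(s₁ + t + r) % n, Nat.mod_lt _ hn0⟩ =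
            w ⟨(s₂ + t + r) % n, Nat.mod_lt _ hn0⟩} ⊆ ⋃ ab, G ab := by
    rintro w ⟨r, s₁, s₂, h1, h2, h3⟩
    refine Set.mem_iUnion.2 ⟨(⟨(s₁ + r) % n, Nat.mod_lt _ hn0⟩, ⟨(s₂ + r) % n, Nat.mod_lt _ hn0⟩),
      ?_, ?_, ?_⟩
    · omega
    · intro t t' ht ht' heq
      simp only [Nat.mod_add_mod] at heq
      have heq2 : (s₁ + t + r) % n = (s₂ + t' + r) % n := by
        rw [show s₁ + t + r = s₁ + r + t by ring, show s₂ + t' + r = s₂ + r + t' by ring]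
        exact heq
      have hmod : (s₁ + t) % n = (s₂ + t') % n := Nat.ModEq.add_right_cancel' r heq2
      rw [Nat.mod_eq_of_lt (by omega), Nat.mod_eq_of_lt (by omega)] at hmod
      omega
    · intro t ht
      have e1 : (⟨((s₁ + r) % n + t) % n, Nat.mod_lt _ hn0⟩ : Fin n) =
          ⟨(s₁ + t + r) % n, Nat.mod_lt _ hn0⟩ := by
        apply Fin.ext
        show ((s₁ + r) % n + t) % n = (s₁ + t + r) % n
        rw [Nat.mod_add_mod]
        congr 1
        ring
      have e2 : (⟨((s₂ + r) % n + t) % n, Nat.mod_lt _ hn0⟩ : Fin n) =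
          ⟨(s₂ + t + r) % n, Nat.mod_lt _ hn0⟩ := by
        apply Fin.ext
        show ((s₂ + r) % n + t) % n = (s₂ + t + r) % n
        rw [Nat.mod_add_mod]
        congr 1
        ring
      rw [e1, e2]
      exact h3 t ht
  have hevent : ∀ ab : Fin n × Fin n,
      (∑' w : G ab, ∏ i, ENNReal.ofReal (p (w.1 i))) ≤ (ENNReal.ofReal β) ^ L := by
    intro ab
    by_cases hgood : L ≤ n ∧
        ∀ t t' : ℕ, t < L → t' < L → ((ab.1 : ℕ) + t) % n ≠ ((ab.2 : ℕ) + t') % n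
    · obtain ⟨hLn, hdisj⟩ := hgood
      set x : Fin L → Fin n := fun t => ⟨((ab.1 : ℕ) + t) % n, Nat.mod_lt _ hn0⟩ with hx
      set y : Fin L → Fin n := fun t => ⟨((ab.2 : ℕ) + t) % n, Nat.mod_lt _ hn0⟩ with hy
      have hxinj : Function.Injective x := by
        intro t t' h
        have hv : ((ab.1 : ℕ) + (t : ℕ)) % n = ((ab.1 : ℕ) + (t' : ℕ)) % n :=
          congrArg Fin.val h
        have hmod : (t : ℕ) % n = (t' : ℕ) % n := Nat.ModEq.add_left_cancel' _ hv
        rw [Nat.mod_eq_of_lt (lt_of_lt_of_le t.2 hLn),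
          Nat.mod_eq_of_lt (lt_of_lt_of_le t'.2 hLn)] at hmod
        exact Fin.ext hmod
      have hxy : ∀ t t', x t ≠ y t' := fun t t' h =>
        hdisj t t' t.2 t'.2 (congrArg Fin.val h)
      have hsub2 : G ab ⊆ {w : Fin n → ℕ | ∀ t : Fin L, w (x t) = w (y t)} := by
        rintro w ⟨-, -, h3⟩
        exact fun t => h3 t t.2
      refine le_trans (ENNReal.tsum_mono_subtype (fun w => ∏ i, ENNReal.ofReal (p (w i))) hsub2) ?_
      exact event_bound _ hq1 _ hqB x y hxinj hxy
    · haveI : IsEmpty (G ab) := ⟨fun w => hgood ⟨w.2.1, w.2.2.1⟩⟩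
      rw [tsum_empty]
      exact zero_le
  have hnum : ((n : ℝ) * n) * β ^ L ≤ 1 / n := by
    have hlogb : (1:ℝ) < 1 / β := by
      rw [lt_div_iff₀ hβ0]
      linarith
    have hβL : β ^ L ≤ (n : ℝ) ^ (-(3:ℝ)) := by
      have hle : (3 * Real.logb (1 / β) n : ℝ) ≤ (L : ℝ) := Nat.le_ceil _
      have h1 : β ^ ((L : ℕ) : ℝ) ≤ β ^ (3 * Real.logb (1 / β) n) :=
        Real.rpow_le_rpow_of_exponent_ge hβ0 hβ1.le hle
      rw [Real.rpow_natCast] at h1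
      refine h1.trans_eq ?_
      calc β ^ (3 * Real.logb (1 / β) n)
          = ((1 / β) ^ (3 * Real.logb (1 / β) n))⁻¹ := by
            rw [one_div, Real.inv_rpow hβ0.le, inv_inv]
        _ = ((n : ℝ) ^ (3:ℝ))⁻¹ := by
            rw [show (3 : ℝ) * Real.logb (1 / β) n = Real.logb (1 / β) n * 3 by ring,
              Real.rpow_mul (by positivity),
              Real.rpow_logb (by positivity) (ne_of_gt hlogb) hnR]
        _ = (n : ℝ) ^ (-(3:ℝ)) := (Real.rpow_neg (le_of_lt hnR) 3).symm
    have h3 : (n : ℝ) ^ (-(3:ℝ)) = ((n : ℝ) ^ (3:ℕ))⁻¹ := by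
      rw [Real.rpow_neg (le_of_lt hnR), ← Real.rpow_natCast (n:ℝ) 3]
      norm_num
    rw [h3] at hβL
    calc ((n : ℝ) * n) * β ^ L ≤ ((n : ℝ) * n) * ((n : ℝ) ^ (3:ℕ))⁻¹ := by
          have hb : 0 ≤ β ^ L := by positivity
          nlinarith [sq_nonneg ((n:ℝ))]
      _ = 1 / n := by
          field_simp
  have hsum_pairs : (∑ _ab : Fin n × Fin n, (ENNReal.ofReal β) ^ L) =
      ENNReal.ofReal (((n : ℝ) * n) * β ^ L) := by
    rw [Finset.sum_const, Finset.card_univ, Fintype.card_prod, Fintype.card_fin,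
      nsmul_eq_mul, ← ENNReal.ofReal_pow hβ0.le]
    rw [show ((n * n : ℕ) : ℝ≥0∞) = ENNReal.ofReal ((n : ℝ) * n) by
      rw [← ENNReal.ofReal_natCast (n * n)]
      congr 1
      push_cast
      ring]
    rw [← ENNReal.ofReal_mul (by positivity)]
  calc (∑' w : {w : Fin n → ℕ |
      ∃ r s₁ s₂ : ℕ, s₁ + L ≤ s₂ ∧ s₂ + L ≤ n ∧
        ∀ t : ℕ, ∀ ht : t < L,
          w ⟨(s₁ + t + r) % n, Nat.mod_lt _ hn0⟩ =
            w ⟨(s₂ + t + r) % n, Nat.mod_lt _ hn0⟩},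
      ∏ i, ENNReal.ofReal (p (w.1 i)))
      ≤ ∑' w : (⋃ ab, G ab), ∏ i, ENNReal.ofReal (p (w.1 i)) :=
        ENNReal.tsum_mono_subtype (fun w => ∏ i, ENNReal.ofReal (p (w i))) hsub
    _ ≤ ∑ ab : Fin n × Fin n, ∑' w : G ab, ∏ i, ENNReal.ofReal (p (w.1 i)) :=
        ENNReal.tsum_iUnion_le (fun w => ∏ i, ENNReal.ofReal (p (w i))) G
    _ ≤ ∑ _ab : Fin n × Fin n, (ENNReal.ofReal β) ^ L :=
        Finset.sum_le_sum fun ab _ => hevent ab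
    _ = ENNReal.ofReal (((n : ℝ) * n) * β ^ L) := hsum_pairs
    _ ≤ ENNReal.ofReal (1 / n) := ENNReal.ofReal_le_ofReal hnum
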